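/- For x > 0 and 0 < s < 1, x^{1−s} < Γ(x+1)/Γ(x+s) < (x+s)^{1−s}. -/
import Mathlib

open Real Set

private lemma gamma_interp_le (a b t : ℝ) (ha : 0 < a) (hb : 0 < b)
    (ht0 : 0 ≤ t) (ht1 : t ≤ 1) :
    Real.Gamma (t * a + (1 - t) * b) ≤ Real.Gamma a ^ t * Real.Gamma b ^ (1 - t) := by
  have h := Real.convexOn_log_Gamma.2 (mem_Ioi.2 ha) (mem_Ioi.2 hb) ht0
    (by linarith : (0:ℝ) ≤ 1 - t) (by ring)
  simp only [smul_eq_mul, Function.comp_apply] at h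
  have hc : 0 < t * a + (1 - t) * b := by
    rcases ht1.lt_or_eq with h|h
    · nlinarith [mul_nonneg ht0 ha.le, mul_pos (by linarith : (0:ℝ) < 1 - t) hb]
    · rw [h]; simpa using ha
  have hΓc := Real.Gamma_pos_of_pos hc
  have hΓa := Real.Gamma_pos_of_pos ha
  have hΓb := Real.Gamma_pos_of_pos hb
  calc Real.Gamma (t * a + (1 - t) * b)
      = Real.exp (Real.log (Real.Gamma (t * a + (1 - t) * b))) := (Real.exp_log hΓc).symm
    _ ≤ Real.exp (t * Real.log (Real.Gamma a) + (1 - t) * Real.log (Real.Gamma b)) :=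
        Real.exp_le_exp.2 h
    _ = Real.Gamma a ^ t * Real.Gamma b ^ (1 - t) := by
        rw [Real.exp_add, Real.rpow_def_of_pos hΓa, Real.rpow_def_of_pos hΓb,
          mul_comm (Real.log _) t, mul_comm (Real.log _) (1 - t)]

private lemma amgm_strict (a b t : ℝ) (ha : 0 < a) (hab : a < b)
    (ht0 : 0 < t) (ht1 : t < 1) :
    a ^ t * b ^ (1 - t) < t * a + (1 - t) * b := by
  have hb : 0 < b := ha.trans hab
  have h := strictConcaveOn_log_Ioi.2 (mem_Ioi.2 ha) (mem_Ioi.2 hb) hab.ne ht0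
    (by linarith : (0:ℝ) < 1 - t) (by ring)
  simp only [smul_eq_mul] at h
  calc a ^ t * b ^ (1 - t)
      = Real.exp (t * Real.log a + (1 - t) * Real.log b) := by
        rw [Real.exp_add, Real.rpow_def_of_pos ha, Real.rpow_def_of_pos hb,
          mul_comm (Real.log a) t, mul_comm (Real.log b) (1 - t)]
    _ < Real.exp (Real.log (t * a + (1 - t) * b)) := Real.exp_lt_exp.2 h
    _ = t * a + (1 - t) * b := Real.exp_log (by nlinarith)

theorem gautschi (x s : ℝ) (hx : 0 < x) (hs0 : 0 < s) (hs1 : s < 1) :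
    x ^ (1 - s) < Real.Gamma (x + 1) / Real.Gamma (x + s) ∧
      Real.Gamma (x + 1) / Real.Gamma (x + s) < (x + s) ^ (1 - s) := by
  have hxs : 0 < x + s := by linarith
  have hx1 : 0 < x + 1 := by linarith
  have hΓxs := Real.Gamma_pos_of_pos hxs
  have hΓx1 := Real.Gamma_pos_of_pos hx1
  have hG1 : Real.Gamma (x + s + 1) = (x + s) * Real.Gamma (x + s) :=
    Real.Gamma_add_one hxs.ne'
  have hG2 : Real.Gamma (x + 1 + 1) = (x + 1) * Real.Gamma (x + 1) :=
    Real.Gamma_add_one hx1.ne'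
  have hG3 : Real.Gamma (x + s + 1 + 1) = (x + s + 1) * Real.Gamma (x + s + 1) :=
    Real.Gamma_add_one (by linarith)
  constructor
  · -- lower bound
    -- Γ(x+s+1) ≤ Γ(x+1)^(1-s) * Γ(x+2)^s
    have h1 : Real.Gamma (x + s + 1) ≤
        Real.Gamma (x + 1) ^ (1 - s) * Real.Gamma (x + 1 + 1) ^ s := by
      have := gamma_interp_le (x + 1) (x + 1 + 1) (1 - s) hx1 (by linarith)
        (by linarith) (by linarith)
      have he : (1 - s) * (x + 1) + (1 - (1 - s)) * (x + 1 + 1) = x + s + 1 := by ring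
      rw [he] at this
      simpa using this
    -- so (x+s) Γ(x+s) ≤ Γ(x+1) * (x+1)^s
    have h2 : (x + s) * Real.Gamma (x + s) ≤ Real.Gamma (x + 1) * (x + 1) ^ s := by
      rw [← hG1]
      calc Real.Gamma (x + s + 1)
          ≤ Real.Gamma (x + 1) ^ (1 - s) * Real.Gamma (x + 1 + 1) ^ s := h1
        _ = Real.Gamma (x + 1) * (x + 1) ^ s := by
            rw [hG2, Real.mul_rpow hx1.le hΓx1.le]
            have e2 : Real.Gamma (x+1) ^ (1-s) * Real.Gamma (x+1) ^ s = Real.Gamma (x+1) := by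
              rw [← Real.rpow_add hΓx1]; norm_num
            calc Real.Gamma (x + 1) ^ (1 - s) * ((x + 1) ^ s * Real.Gamma (x + 1) ^ s)
                = (Real.Gamma (x+1) ^ (1-s) * Real.Gamma (x+1) ^ s) * (x+1) ^ s := by ring
              _ = Real.Gamma (x + 1) * (x + 1) ^ s := by rw [e2]
    have hstrict : x ^ (1 - s) * (x + 1) ^ s < x + s := by
      have := amgm_strict x (x + 1) (1 - s) hx (by linarith) (by linarith) (by linarith)
      calc x ^ (1 - s) * (x + 1) ^ s
          = x ^ (1 - s) * (x + 1) ^ (1 - (1 - s)) := by norm_num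
        _ < (1 - s) * x + (1 - (1 - s)) * (x + 1) := this
        _ = x + s := by ring
    rw [lt_div_iff₀ hΓxs]
    have hp : (0:ℝ) < (x + 1) ^ s := Real.rpow_pos_of_pos hx1 s
    -- x^(1-s) * Γ(x+s) * (x+1)^s < (x+s)*Γ(x+s) ≤ Γ(x+1)*(x+1)^s
    have : x ^ (1 - s) * Real.Gamma (x + s) * (x + 1) ^ s <
        Real.Gamma (x + 1) * (x + 1) ^ s := by
      calc x ^ (1 - s) * Real.Gamma (x + s) * (x + 1) ^ s
          = (x ^ (1 - s) * (x + 1) ^ s) * Real.Gamma (x + s) := by ring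
        _ < (x + s) * Real.Gamma (x + s) := by
            exact mul_lt_mul_of_pos_right hstrict hΓxs
        _ ≤ Real.Gamma (x + 1) * (x + 1) ^ s := h2
    exact lt_of_mul_lt_mul_right this hp.le
  · -- upper bound
    -- Γ(x+2) ≤ Γ(x+s+1)^s * Γ(x+s+2)^(1-s)
    have h1 : Real.Gamma (x + 1 + 1) ≤
        Real.Gamma (x + s + 1) ^ s * Real.Gamma (x + s + 1 + 1) ^ (1 - s) := by
      have := gamma_interp_le (x + s + 1) (x + s + 1 + 1) s (by linarith) (by linarith)
        hs0.le hs1.le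
      have he : s * (x + s + 1) + (1 - s) * (x + s + 1 + 1) = x + 1 + 1 := by ring
      rw [he] at this
      exact this
    -- rewrite RHS
    have hΓs1 : 0 < Real.Gamma (x + s + 1) := Real.Gamma_pos_of_pos (by linarith)
    have h2 : (x + 1) * Real.Gamma (x + 1) ≤
        (x + s) * (x + s + 1) ^ (1 - s) * Real.Gamma (x + s) := by
      rw [← hG2]
      calc Real.Gamma (x + 1 + 1)
          ≤ Real.Gamma (x + s + 1) ^ s * Real.Gamma (x + s + 1 + 1) ^ (1 - s) := h1
        _ = (x + s) * (x + s + 1) ^ (1 - s) * Real.Gamma (x + s) := by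
            rw [hG3, hG1, Real.mul_rpow hxs.le hΓxs.le,
              Real.mul_rpow (by positivity) (by positivity),
              Real.mul_rpow hxs.le hΓxs.le]
            have e1 : (x+s) ^ s * (x+s) ^ (1-s) = x + s := by
              rw [← Real.rpow_add hxs]; norm_num
            have e2 : Real.Gamma (x+s) ^ s * Real.Gamma (x+s) ^ (1-s) = Real.Gamma (x+s) := by
              rw [← Real.rpow_add hΓxs]; norm_num
            calc (x + s) ^ s * Real.Gamma (x + s) ^ s *
                  ((x + s + 1) ^ (1 - s) * ((x + s) ^ (1 - s) * Real.Gamma (x + s) ^ (1 - s)))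
                = ((x+s) ^ s * (x+s) ^ (1-s)) *
                  (Real.Gamma (x+s) ^ s * Real.Gamma (x+s) ^ (1-s)) * (x + s + 1) ^ (1 - s) := by
                  ring
              _ = (x + s) * (x + s + 1) ^ (1 - s) * Real.Gamma (x + s) := by
                  rw [e1, e2]; ring
    have hstrict : (x + s) ^ s * (x + s + 1) ^ (1 - s) < x + 1 := by
      have := amgm_strict (x + s) (x + s + 1) s hxs (by linarith) hs0 hs1
      calc (x + s) ^ s * (x + s + 1) ^ (1 - s) < s * (x + s) + (1 - s) * (x + s + 1) := this
        _ = x + 1 := by ring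
    rw [div_lt_iff₀ hΓxs]
    have hp1s : (0:ℝ) < (x + s) ^ (1 - s) := Real.rpow_pos_of_pos hxs (1 - s)
    have hstrict2 : (x + s) * (x + s + 1) ^ (1 - s) < (x + 1) * (x + s) ^ (1 - s) := by
      have h := mul_lt_mul_of_pos_right hstrict hp1s
      have e1 : (x+s) ^ s * (x+s) ^ (1-s) = x + s := by
        rw [← Real.rpow_add hxs]; norm_num
      calc (x + s) * (x + s + 1) ^ (1 - s)
          = (x + s) ^ s * (x + s + 1) ^ (1 - s) * (x + s) ^ (1 - s) := by
            linear_combination ((x + s + 1) ^ (1 - s)) * e1.symm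
        _ < (x + 1) * (x + s) ^ (1 - s) := h
    have key : (x + 1) * (Real.Gamma (x + 1)) <
        (x + 1) * ((x + s) ^ (1 - s) * Real.Gamma (x + s)) := by
      calc (x + 1) * Real.Gamma (x + 1)
          ≤ (x + s) * (x + s + 1) ^ (1 - s) * Real.Gamma (x + s) := h2
        _ < (x + 1) * (x + s) ^ (1 - s) * Real.Gamma (x + s) :=
            mul_lt_mul_of_pos_right hstrict2 hΓxs
        _ = (x + 1) * ((x + s) ^ (1 - s) * Real.Gamma (x + s)) := by ring
    exact lt_of_mul_lt_mul_left key hx1.le
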